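/- Let M = 2N with N ≥ 2 even, and in A_M^b set B_1 = u_{M−1} u_{M−3} ⋯ u_3 u_1 and B_2 = u_M u_{M−2} ⋯ u_4 u_2. Then: (i) B_1 u_k + u_k B_1 = 0 and B_2 u_k + u_k B_2 = 0 for every k ∈ ℤ/M; (ii) B_1 B_2 = B_2 B_1; (iii) with Ĉ_1 = u_{M−1}^2 u_{M−3}^2 ⋯ u_1^2, Ĉ_2 = u_M^2 u_{M−2}^2 ⋯ u_2^2 and Ĉ = u_M u_{M−1} ⋯ u_2 u_1, one has Ĉ_1 = (−1)^{N(N−1)/2} B_1^2, Ĉ_2 = (−1)^{N(N−1)/2} B_2^2, and Ĉ = (−1)^{(N−1)(N−2)/2} ω^{1−N} B_2 B_1. -/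

import Mathlib

noncomputable section
open scoped BigOperators Classical

abbrev K : Type := RatFunc ℂ

noncomputable def ω : K := RatFunc.X


/-- The free algebra on generators `u_n`, `n ∈ ℤ/M`. -/
abbrev FM (M : ℕ) : Type := FreeAlgebra K (ZMod M)

noncomputable def vgen {M : ℕ} (n : ZMod M) : FM M := FreeAlgebra.ι K n

/-- Defining relations of the periodic non-deformation quantum algebra `A_M^b`. -/
inductive RelBM (M : ℕ) : FM M → FM M → Prop
  | comm1 (n : ZMod M) :
      RelBM M (vgen n * vgen (n+1))
        ((((-1 : K) ^ n.val) * ω) • (vgen (n+1) * vgen n))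
  | acomm (n m : ZMod M) : n ≠ m → n - m ≠ 1 → n - m ≠ -1 →
      RelBM M (vgen n * vgen m) (-(vgen m * vgen n))

/-- The periodic non-deformation quantum algebra `A_M^b`. -/
abbrev AbM (M : ℕ) : Type := RingQuot (RelBM M)

noncomputable def πbM (M : ℕ) : FM M →ₐ[K] AbM M := RingQuot.mkAlgHom K (RelBM M)

/-- The generator `u_n` of `A_M^b`. -/
noncomputable def wb (M : ℕ) (n : ZMod M) : AbM M := πbM M (vgen n)

/-- The element `B_1 = u_{M−1} u_{M−3} ⋯ u_3 u_1` of `A_M^b`. -/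
noncomputable def B1 (M : ℕ) : AbM M :=
  (List.ofFn (fun j : Fin (M/2) => wb M (((M - 1 - 2*(j : ℕ) : ℕ) : ZMod M)))).prod

/-- The element `B_2 = u_M u_{M−2} ⋯ u_4 u_2` of `A_M^b`. -/
noncomputable def B2 (M : ℕ) : AbM M :=
  (List.ofFn (fun j : Fin (M/2) => wb M (((M - 2*(j : ℕ) : ℕ) : ZMod M)))).prod

/-- The element `Ĉ_1 = u_{M−1}² u_{M−3}² ⋯ u_3² u_1²` of `A_M^b`. -/
noncomputable def Chat1 (M : ℕ) : AbM M :=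
  (List.ofFn (fun j : Fin (M/2) => (wb M (((M - 1 - 2*(j : ℕ) : ℕ) : ZMod M)))^2)).prod

/-- The element `Ĉ_2 = u_M² u_{M−2}² ⋯ u_4² u_2²` of `A_M^b`. -/
noncomputable def Chat2 (M : ℕ) : AbM M :=
  (List.ofFn (fun j : Fin (M/2) => (wb M (((M - 2*(j : ℕ) : ℕ) : ZMod M)))^2)).prod

/-- The element `Ĉ = u_M u_{M−1} ⋯ u_2 u_1` of `A_M^b`. -/
noncomputable def ChatB (M : ℕ) : AbM M :=
  (List.ofFn (fun j : Fin M => wb M (((M - (j : ℕ) : ℕ) : ZMod M)))).prod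

-- basic facts
lemma omega_ne : (ω : K) ≠ 0 := RatFunc.X_ne_zero

lemma unit_ne (v : ℕ) : ((-1 : K) ^ v * ω) ≠ 0 := by
  apply mul_ne_zero (pow_ne_zero _ (by norm_num)) omega_ne

noncomputable def cc (M : ℕ) (n m : ZMod M) : K :=
  if n = m then 1
  else if m = n + 1 then ((-1 : K) ^ n.val) * ω
  else if n = m + 1 then (((-1 : K) ^ m.val) * ω)⁻¹
  else -1

lemma wb_rel (M : ℕ) (n : ZMod M) :
    wb M n * wb M (n+1) = (((-1 : K) ^ n.val) * ω) • (wb M (n+1) * wb M n) := by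
  have h := RingQuot.mkAlgHom_rel K (RelBM.comm1 (M := M) n)
  simpa [wb, πbM, map_mul, map_smul] using h

lemma wb_acomm (M : ℕ) (n m : ZMod M) (h1 : n ≠ m) (h2 : n - m ≠ 1) (h3 : n - m ≠ -1) :
    wb M n * wb M m = -(wb M m * wb M n) := by
  have h := RingQuot.mkAlgHom_rel K (RelBM.acomm (M := M) n m h1 h2 h3)
  simpa [wb, πbM, map_mul] using h

lemma wb_swap (M : ℕ) (hM : 3 ≤ M) (n m : ZMod M) :
    wb M n * wb M m = cc M n m • (wb M m * wb M n) := by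
  have hone : (1 : ZMod M) ≠ 0 := by
    have : ((1:ℕ) : ZMod M) ≠ 0 := by
      rw [Ne, ZMod.natCast_eq_zero_iff]
      intro h; have := Nat.le_of_dvd one_pos h; omega
    simpa using this
  have htwo : (2 : ZMod M) ≠ 0 := by
    have : ((2:ℕ) : ZMod M) ≠ 0 := by
      rw [Ne, ZMod.natCast_eq_zero_iff]
      intro h; have := Nat.le_of_dvd two_pos h; omega
    simpa using this
  by_cases e0 : n = m
  · subst e0; simp [cc]
  by_cases e1 : m = n + 1
  · subst e1
    rw [wb_rel]
    congr 1
    rw [cc]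
    rw [if_neg e0, if_pos rfl]
  by_cases e2 : n = m + 1
  · have h := wb_rel M m
    rw [← e2] at h
    rw [cc, if_neg e0, if_neg e1, if_pos e2]
    rw [h, smul_smul, inv_mul_cancel₀ (unit_ne _), one_smul]
  · have h2' : n - m ≠ 1 := fun h => e2 (by linear_combination h)
    have h3' : n - m ≠ -1 := fun h => e1 (by linear_combination -h)
    rw [cc, if_neg e0, if_neg e1, if_neg e2, wb_acomm M n m e0 h2' h3']
    exact (neg_one_smul K _).symm

lemma move_list (M : ℕ) (hM : 3 ≤ M) (k : ZMod M) :
    ∀ L : List (ZMod M),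
      (L.map (wb M)).prod * wb M k
        = (L.map (fun j => cc M j k)).prod • (wb M k * (L.map (wb M)).prod)
  | [] => by simp
  | a :: L => by
    have IH := move_list M hM k L
    set P := (L.map (wb M)).prod with hP
    calc (((a :: L).map (wb M)).prod) * wb M k
        = wb M a * (P * wb M k) := by
          simp [List.prod_cons, mul_assoc, hP]
      _ = wb M a * ((L.map (fun j => cc M j k)).prod • (wb M k * P)) := by rw [IH]
      _ = (L.map (fun j => cc M j k)).prod • (wb M a * wb M k * P) := by
          rw [mul_smul_comm, mul_assoc]
      _ = (L.map (fun j => cc M j k)).prod • ((cc M a k • (wb M k * wb M a)) * P) := by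
          rw [wb_swap M hM a k]
      _ = (cc M a k * (L.map (fun j => cc M j k)).prod) • (wb M k * (wb M a * P)) := by
          rw [smul_mul_assoc, smul_smul, mul_assoc, mul_comm (cc M a k)]
      _ = (((a :: L).map (fun j => cc M j k)).prod) • (wb M k * ((a :: L).map (wb M)).prod) := by
          simp [List.prod_cons, hP]

lemma prod_eval_one {n : ℕ} (f : Fin n → K) (j₀ : Fin n)
    (hg : ∀ j, j ≠ j₀ → f j = -1) :
    (List.ofFn f).prod = f j₀ * (-1)^(n-1) := by
  rw [List.prod_ofFn]
  rw [← Finset.mul_prod_erase Finset.univ f (Finset.mem_univ j₀)]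
  congr 1
  rw [Finset.prod_congr rfl (fun x hx => hg x (Finset.ne_of_mem_erase hx))]
  rw [Finset.prod_const, Finset.card_erase_of_mem (Finset.mem_univ j₀)]
  simp

lemma prod_eval_two {n : ℕ} (f : Fin n → K) (j₁ j₂ : Fin n) (h12 : j₁ ≠ j₂)
    (hg : ∀ j, j ≠ j₁ → j ≠ j₂ → f j = -1) :
    (List.ofFn f).prod = f j₁ * f j₂ * (-1)^(n-2) := by
  rw [List.prod_ofFn]
  rw [← Finset.mul_prod_erase Finset.univ f (Finset.mem_univ j₁)]
  have hj₂ : j₂ ∈ Finset.univ.erase j₁ := Finset.mem_erase.2 ⟨h12.symm, Finset.mem_univ _⟩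
  rw [← Finset.mul_prod_erase _ f hj₂, ← mul_assoc]
  congr 1
  rw [Finset.prod_congr rfl (fun x hx => hg x
        (Finset.ne_of_mem_erase (Finset.mem_of_mem_erase hx)) (Finset.ne_of_mem_erase hx))]
  rw [Finset.prod_const, Finset.card_erase_of_mem hj₂,
      Finset.card_erase_of_mem (Finset.mem_univ j₁)]
  simp only [Finset.card_univ, Fintype.card_fin]
  congr 1

-- ZMod helpers
lemma natCast_inj {M : ℕ} {a b : ℕ} (ha : a < M) (hb : b < M) (h : (a : ZMod M) = b) : a = b := by
  have := congrArg ZMod.val h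
  rwa [ZMod.val_cast_of_lt ha, ZMod.val_cast_of_lt hb] at this

noncomputable def φ (N : ℕ) : ZMod (2*N) →+* ZMod 2 := ZMod.castHom ⟨N, rfl⟩ (ZMod 2)

lemma phi_natCast (N a : ℕ) : φ N ((a : ℕ) : ZMod (2*N)) = (a : ZMod 2) := map_natCast _ a

lemma cast2_odd {a : ℕ} (h : a % 2 = 1) : (a : ZMod 2) = 1 := by
  rw [← ZMod.natCast_mod, h, Nat.cast_one]

lemma cast2_even {a : ℕ} (h : a % 2 = 0) : (a : ZMod 2) = 0 := by
  rw [← ZMod.natCast_mod, h, Nat.cast_zero]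

lemma one_ne' {M : ℕ} (hM : 3 ≤ M) : (1 : ZMod M) ≠ 0 := by
  have : ((1:ℕ) : ZMod M) ≠ 0 := by
    rw [Ne, ZMod.natCast_eq_zero_iff]
    intro h; have := Nat.le_of_dvd one_pos h; omega
  simpa using this

lemma two_ne' {M : ℕ} (hM : 3 ≤ M) : (2 : ZMod M) ≠ 0 := by
  have : ((2:ℕ) : ZMod M) ≠ 0 := by
    rw [Ne, ZMod.natCast_eq_zero_iff]
    intro h; have := Nat.le_of_dvd two_pos h; omega
  simpa using this

-- cc branch lemmas
lemma cc_self (M : ℕ) (k : ZMod M) : cc M k k = 1 := by simp [cc]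

lemma cc_neg_one {M : ℕ} {n k : ZMod M} (h0 : n ≠ k) (h1 : k ≠ n + 1) (h2 : n ≠ k + 1) :
    cc M n k = -1 := by
  rw [cc, if_neg h0, if_neg h1, if_neg h2]

lemma cc_up {M : ℕ} (hM : 3 ≤ M) (k : ZMod M) :
    cc M (k+1) k = (((-1 : K) ^ k.val) * ω)⁻¹ := by
  rw [cc, if_neg, if_neg, if_pos rfl]
  · intro h
    exact two_ne' hM (by linear_combination -h)
  · intro h
    exact one_ne' hM (by linear_combination h)

lemma cc_down {M : ℕ} (hM : 3 ≤ M) (k : ZMod M) :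
    cc M (k-1) k = ((-1 : K) ^ (k-1).val) * ω := by
  rw [cc, if_neg, if_pos (by ring)]
  intro h
  exact one_ne' hM (by linear_combination -h)

-- parity of val
lemma neg_one_pow_mod {M : ℕ} (hM : Even M) (x : ℕ) : ((-1:K))^(x % M) = (-1)^x := by
  conv_rhs => rw [← Nat.div_add_mod x M]
  rw [pow_add, pow_mul, hM.neg_one_pow, one_pow, one_mul]

lemma eps_succ {M : ℕ} (hM : Even M) (h1 : 1 < M) (n : ZMod M) :
    (-1:K) ^ ((n + 1).val) = -((-1:K) ^ n.val) := by
  haveI : NeZero M := ⟨by omega⟩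
  haveI : Fact (1 < M) := ⟨h1⟩
  rw [ZMod.val_add, ZMod.val_one, neg_one_pow_mod hM, pow_add, pow_one]
  ring

lemma neg_one_pow_val_even {M : ℕ} [NeZero M] {a : ℕ} (h : a % 2 = 0) (ha : a < M) :
    ((-1:K)) ^ ((a : ZMod M)).val = 1 := by
  rw [ZMod.val_cast_of_lt ha]
  exact Even.neg_one_pow (Nat.even_iff.2 h)

-- index functions
noncomputable def g1 (N : ℕ) (j : Fin N) : ZMod (2*N) := ((2*N - 1 - 2*(j:ℕ) : ℕ) : ZMod (2*N))
noncomputable def g2 (N : ℕ) (j : Fin N) : ZMod (2*N) := ((2*N - 2*(j:ℕ) : ℕ) : ZMod (2*N))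

lemma g1_parity (N : ℕ) (j : Fin N) : φ N (g1 N j) = 1 := by
  rw [g1, phi_natCast]
  apply cast2_odd
  have := j.isLt; omega

lemma g2_parity (N : ℕ) (j : Fin N) : φ N (g2 N j) = 0 := by
  rw [g2, phi_natCast]
  apply cast2_even
  have := j.isLt; omega

lemma g1_inj (N : ℕ) {j j' : Fin N} (h : g1 N j = g1 N j') : j = j' := by
  have h1 := j.isLt; have h2 := j'.isLt
  have := natCast_inj (by omega) (by omega) h
  exact Fin.ext (by omega)

lemma g2_cast (N : ℕ) (j : Fin N) : g2 N j = -((2*(j:ℕ) : ℕ) : ZMod (2*N)) := by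
  have h1 := j.isLt
  rw [g2, Nat.cast_sub (by omega), ZMod.natCast_self, zero_sub]

lemma g2_inj (N : ℕ) {j j' : Fin N} (h : g2 N j = g2 N j') : j = j' := by
  have h1 := j.isLt; have h2 := j'.isLt
  rw [g2_cast, g2_cast, neg_inj] at h
  have := natCast_inj (by omega) (by omega) h
  exact Fin.ext (by omega)

lemma key_scalar (v w : ℕ) (h : (-1:K)^v = -((-1:K)^w)) :
    ((-1:K)^v*ω)⁻¹ * ((-1:K)^w*ω) = -1 := by
  rw [h]
  have h1 : ((-1:K)^w) ≠ 0 := pow_ne_zero _ (by norm_num)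
  field_simp
  rw [div_self omega_ne]

lemma prodcc_g1 (N : ℕ) (hN : 2 ≤ N) (heven : Even N) (k : ZMod (2*N)) :
    (List.ofFn (fun j : Fin N => cc (2*N) (g1 N j) k)).prod = -1 := by
  haveI : NeZero (2*N) := ⟨by omega⟩
  have hM3 : (3:ℕ) ≤ 2*N := by omega
  have hMeven : Even (2*N) := ⟨N, by ring⟩
  obtain ⟨t, ht⟩ := heven
  set m := k.val with hm
  have hmlt : m < 2*N := ZMod.val_lt k
  have hk : ((m:ℕ) : ZMod (2*N)) = k := ZMod.natCast_rightInverse k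
  rcases Nat.even_or_odd m with hpar | hpar
  · -- m even: two special indices
    have hp2 : m % 2 = 0 := Nat.even_iff.1 hpar
    have hφk : φ N k = 0 := by rw [← hk, phi_natCast]; exact cast2_even hp2
    have pf1 : (2*N-2-m)/2 < N := by omega
    have pf2 : (if m = 0 then 0 else (2*N-m)/2) < N := by split <;> omega
    have hg1 : g1 N ⟨(2*N-2-m)/2, pf1⟩ = k + 1 := by
      show (((2*N - 1 - 2*((2*N-2-m)/2) : ℕ)) : ZMod (2*N)) = k + 1
      rw [(by omega : 2*N - 1 - 2*((2*N-2-m)/2) = m + 1)]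
      push_cast
      rw [hk]
    have hg2 : g1 N ⟨(if m = 0 then 0 else (2*N-m)/2), pf2⟩ = k - 1 := by
      show (((2*N - 1 - 2*(if m = 0 then 0 else (2*N-m)/2) : ℕ)) : ZMod (2*N)) = k - 1
      by_cases h0 : m = 0
      · rw [if_pos h0]
        have hk0 : k = 0 := by rw [← hk, h0, Nat.cast_zero]
        rw [hk0, (by omega : 2*N - 1 - 2*0 = 2*N - 1), Nat.cast_sub (by omega),
            ZMod.natCast_self, Nat.cast_one, zero_sub]
      · rw [if_neg h0, (by omega : 2*N - 1 - 2*((2*N-m)/2) = m - 1),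
            Nat.cast_sub (by omega : 1 ≤ m), Nat.cast_one, hk]
    have hj12 : (⟨(2*N-2-m)/2, pf1⟩ : Fin N) ≠ ⟨(if m = 0 then 0 else (2*N-m)/2), pf2⟩ := by
      intro h
      have := congrArg Fin.val h
      simp only at this
      split at this <;> omega
    rw [prod_eval_two _ _ _ hj12]
    · rw [hg1, hg2, cc_up hM3, cc_down hM3, ← hm]
      have hNe : (-1:K)^(N-2) = 1 := Even.neg_one_pow ⟨t-1, by omega⟩
      have hv : (-1:K)^m = -((-1:K)^((k-1).val)) := by
        have h := eps_succ hMeven (by omega) (k-1)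
        rw [(by ring : k - 1 + 1 = k), ← hm] at h
        exact h
      rw [hNe, mul_one]
      exact key_scalar _ _ hv
    · intro j hj1 hj2
      apply cc_neg_one
      · intro h
        have := congrArg (φ N) h
        rw [g1_parity, hφk] at this
        exact absurd this (by decide)
      · intro h
        apply hj2
        apply g1_inj N
        rw [hg2]
        linear_combination -h
      · intro h
        apply hj1
        apply g1_inj N
        rw [hg1, h]
  · -- m odd: single special index
    have hp2 : m % 2 = 1 := Nat.odd_iff.1 hpar
    have hφk : φ N k = 1 := by rw [← hk, phi_natCast]; exact cast2_odd hp2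
    have pf0 : (2*N-1-m)/2 < N := by omega
    have hg0 : g1 N ⟨(2*N-1-m)/2, pf0⟩ = k := by
      show (((2*N - 1 - 2*((2*N-1-m)/2) : ℕ)) : ZMod (2*N)) = k
      rw [(by omega : 2*N - 1 - 2*((2*N-1-m)/2) = m), hk]
    rw [prod_eval_one _ ⟨(2*N-1-m)/2, pf0⟩]
    · rw [hg0, cc_self, one_mul]
      exact Odd.neg_one_pow ⟨t-1, by omega⟩
    · intro j hj
      apply cc_neg_one
      · intro h
        apply hj
        apply g1_inj N
        rw [hg0, h]
      · intro h
        have := congrArg (φ N) h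
        rw [map_add, map_one, g1_parity, hφk] at this
        exact absurd this (by decide)
      · intro h
        have := congrArg (φ N) h
        rw [map_add, map_one, g1_parity, hφk] at this
        exact absurd this (by decide)

lemma prodcc_g2 (N : ℕ) (hN : 2 ≤ N) (heven : Even N) (k : ZMod (2*N)) :
    (List.ofFn (fun j : Fin N => cc (2*N) (g2 N j) k)).prod = -1 := by
  haveI : NeZero (2*N) := ⟨by omega⟩
  have hM3 : (3:ℕ) ≤ 2*N := by omega
  have hMeven : Even (2*N) := ⟨N, by ring⟩
  obtain ⟨t, ht⟩ := heven
  set m := k.val with hm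
  have hmlt : m < 2*N := ZMod.val_lt k
  have hk : ((m:ℕ) : ZMod (2*N)) = k := ZMod.natCast_rightInverse k
  rcases Nat.even_or_odd m with hpar | hpar
  · -- m even: single special index
    have hp2 : m % 2 = 0 := Nat.even_iff.1 hpar
    have hφk : φ N k = 0 := by rw [← hk, phi_natCast]; exact cast2_even hp2
    have pf0 : (if m = 0 then 0 else (2*N-m)/2) < N := by split <;> omega
    have hg0 : g2 N ⟨(if m = 0 then 0 else (2*N-m)/2), pf0⟩ = k := by
      show (((2*N - 2*(if m = 0 then 0 else (2*N-m)/2) : ℕ)) : ZMod (2*N)) = k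
      by_cases h0 : m = 0
      · rw [if_pos h0, (by omega : 2*N - 2*0 = 2*N), ZMod.natCast_self, ← hk, h0,
            Nat.cast_zero]
      · rw [if_neg h0, (by omega : 2*N - 2*((2*N-m)/2) = m), hk]
    rw [prod_eval_one _ ⟨(if m = 0 then 0 else (2*N-m)/2), pf0⟩]
    · rw [hg0, cc_self, one_mul]
      exact Odd.neg_one_pow ⟨t-1, by omega⟩
    · intro j hj
      apply cc_neg_one
      · intro h
        apply hj
        apply g2_inj N
        rw [hg0, h]
      · intro h
        have := congrArg (φ N) h
        rw [map_add, map_one, g2_parity, hφk] at this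
        exact absurd this (by decide)
      · intro h
        have := congrArg (φ N) h
        rw [map_add, map_one, g2_parity, hφk] at this
        exact absurd this (by decide)
  · -- m odd: two special indices
    have hp2 : m % 2 = 1 := Nat.odd_iff.1 hpar
    have hφk : φ N k = 1 := by rw [← hk, phi_natCast]; exact cast2_odd hp2
    have pf1 : (if m = 2*N-1 then 0 else (2*N-m-1)/2) < N := by split <;> omega
    have pf2 : (if m = 1 then 0 else (2*N-m+1)/2) < N := by split <;> omega
    have hg1 : g2 N ⟨(if m = 2*N-1 then 0 else (2*N-m-1)/2), pf1⟩ = k + 1 := by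
      show (((2*N - 2*(if m = 2*N-1 then 0 else (2*N-m-1)/2) : ℕ)) : ZMod (2*N)) = k + 1
      by_cases h0 : m = 2*N-1
      · rw [if_pos h0, (by omega : 2*N - 2*0 = m + 1)]
        push_cast
        rw [hk]
      · rw [if_neg h0, (by omega : 2*N - 2*((2*N-m-1)/2) = m + 1)]
        push_cast
        rw [hk]
    have hg2 : g2 N ⟨(if m = 1 then 0 else (2*N-m+1)/2), pf2⟩ = k - 1 := by
      show (((2*N - 2*(if m = 1 then 0 else (2*N-m+1)/2) : ℕ)) : ZMod (2*N)) = k - 1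
      by_cases h0 : m = 1
      · rw [if_pos h0, (by omega : 2*N - 2*0 = 2*N), ZMod.natCast_self, ← hk, h0,
            Nat.cast_one]
        ring
      · rw [if_neg h0, (by omega : 2*N - 2*((2*N-m+1)/2) = m - 1),
            Nat.cast_sub (by omega : 1 ≤ m), Nat.cast_one, hk]
    have hj12 : (⟨(if m = 2*N-1 then 0 else (2*N-m-1)/2), pf1⟩ : Fin N)
        ≠ ⟨(if m = 1 then 0 else (2*N-m+1)/2), pf2⟩ := by
      intro h
      have := congrArg Fin.val h
      simp only at this
      split at this <;> split at this <;> omega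
    rw [prod_eval_two _ _ _ hj12]
    · rw [hg1, hg2, cc_up hM3, cc_down hM3, ← hm]
      have hNe : (-1:K)^(N-2) = 1 := Even.neg_one_pow ⟨t-1, by omega⟩
      have hv : (-1:K)^m = -((-1:K)^((k-1).val)) := by
        have h := eps_succ hMeven (by omega) (k-1)
        rw [(by ring : k - 1 + 1 = k), ← hm] at h
        exact h
      rw [hNe, mul_one]
      exact key_scalar _ _ hv
    · intro j hj1 hj2
      apply cc_neg_one
      · intro h
        have := congrArg (φ N) h
        rw [g2_parity, hφk] at this
        exact absurd this (by decide)
      · intro h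
        apply hj2
        apply g2_inj N
        rw [hg2]
        linear_combination -h
      · intro h
        apply hj1
        apply g2_inj N
        rw [hg1, h]

lemma ofFn_congr' {α : Type*} {m n : ℕ} (h : m = n) (f : ℕ → α) :
    (List.ofFn (fun i : Fin m => f i)) = (List.ofFn (fun i : Fin n => f i)) := by subst h; rfl

lemma B1_eq (N : ℕ) (hN : 1 ≤ N) :
    B1 (2*N) = ((List.ofFn (g1 N)).map (wb (2*N))).prod := by
  simp only [B1, List.map_ofFn]
  congr 1
  exact ofFn_congr' (by omega) (fun t => wb (2*N) (((2*N - 1 - 2*t : ℕ) : ZMod (2*N))))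

lemma B2_eq (N : ℕ) (hN : 1 ≤ N) :
    B2 (2*N) = ((List.ofFn (g2 N)).map (wb (2*N))).prod := by
  simp only [B2, List.map_ofFn]
  congr 1
  exact ofFn_congr' (by omega) (fun t => wb (2*N) (((2*N - 2*t : ℕ) : ZMod (2*N))))

lemma Chat1_eq (N : ℕ) (hN : 1 ≤ N) :
    Chat1 (2*N) = ((List.ofFn (g1 N)).map (fun a => (wb (2*N) a)^2)).prod := by
  simp only [Chat1, List.map_ofFn]
  congr 1
  exact ofFn_congr' (by omega) (fun t => (wb (2*N) (((2*N - 1 - 2*t : ℕ) : ZMod (2*N))))^2)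

lemma Chat2_eq (N : ℕ) (hN : 1 ≤ N) :
    Chat2 (2*N) = ((List.ofFn (g2 N)).map (fun a => (wb (2*N) a)^2)).prod := by
  simp only [Chat2, List.map_ofFn]
  congr 1
  exact ofFn_congr' (by omega) (fun t => (wb (2*N) (((2*N - 2*t : ℕ) : ZMod (2*N))))^2)

lemma B1_anti (N : ℕ) (hN : 2 ≤ N) (heven : Even N) (k : ZMod (2*N)) :
    B1 (2*N) * wb (2*N) k = (-1:K) • (wb (2*N) k * B1 (2*N)) := by
  rw [B1_eq N (by omega), move_list (2*N) (by omega) k (List.ofFn (g1 N))]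
  congr 1
  simp only [List.map_ofFn, Function.comp_def]
  exact prodcc_g1 N hN heven k

lemma B2_anti (N : ℕ) (hN : 2 ≤ N) (heven : Even N) (k : ZMod (2*N)) :
    B2 (2*N) * wb (2*N) k = (-1:K) • (wb (2*N) k * B2 (2*N)) := by
  rw [B2_eq N (by omega), move_list (2*N) (by omega) k (List.ofFn (g2 N))]
  congr 1
  simp only [List.map_ofFn, Function.comp_def]
  exact prodcc_g2 N hN heven k

lemma anti_to_sum {M : ℕ} (x y : AbM M) (h : x * y = (-1:K) • (y * x)) :
    x * y + y * x = 0 := by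
  rw [h]
  calc (-1:K) • (y*x) + y*x = (-1:K) • (y*x) + (1:K) • (y*x) := by rw [one_smul]
    _ = ((-1:K) + 1) • (y*x) := (add_smul _ _ _).symm
    _ = (0:K) • (y*x) := by norm_num
    _ = 0 := zero_smul K _

lemma move_all (M : ℕ) (x : AbM M) (h : ∀ j, x * wb M j = (-1:K) • (wb M j * x)) :
    ∀ L : List (ZMod M),
      x * (L.map (wb M)).prod = ((-1:K)^L.length) • ((L.map (wb M)).prod * x)
  | [] => by simp
  | a :: L => by
    have IH := move_all M x h L
    set P := (L.map (wb M)).prod with hP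
    calc x * ((a :: L).map (wb M)).prod
        = (x * wb M a) * P := by simp [List.prod_cons, mul_assoc, hP]
      _ = ((-1:K) • (wb M a * x)) * P := by rw [h a]
      _ = (-1:K) • (wb M a * (x * P)) := by rw [smul_mul_assoc, mul_assoc]
      _ = (-1:K) • (wb M a * (((-1:K)^L.length) • (P * x))) := by rw [IH]
      _ = ((-1:K)^(L.length+1)) • (wb M a * P * x) := by
          rw [mul_smul_comm, smul_smul, pow_succ, mul_assoc]
          ring_nf
      _ = ((-1:K)^((a :: L).length)) • (((a :: L).map (wb M)).prod * x) := by
          simp [List.prod_cons, hP]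

lemma sq_list (M : ℕ) (hM : 3 ≤ M) :
    ∀ L : List (ZMod M), L.Nodup → (∀ a ∈ L, ∀ b ∈ L, a ≠ b → cc M a b = -1) →
      (L.map (wb M)).prod * (L.map (wb M)).prod
        = ((-1:K)^(L.length.choose 2)) • (L.map (fun a => (wb M a)^2)).prod
  | [], _, _ => by simp
  | a :: L, hnd, hcc => by
    have hndL : L.Nodup := (List.nodup_cons.1 hnd).2
    have haL : a ∉ L := (List.nodup_cons.1 hnd).1
    have IH := sq_list M hM L hndL (fun x hx y hy hxy =>
      hcc x (List.mem_cons_of_mem a hx) y (List.mem_cons_of_mem a hy) hxy)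
    set P := (L.map (wb M)).prod with hP
    have hmove : P * wb M a = ((-1:K)^L.length) • (wb M a * P) := by
      rw [move_list M hM a L]
      congr 1
      rw [List.prod_eq_pow_card _ (-1 : K), List.length_map]
      intro x hx
      obtain ⟨b, hb, rfl⟩ := List.mem_map.1 hx
      exact hcc b (List.mem_cons_of_mem a hb) a List.mem_cons_self
        (fun hba => haL (hba ▸ hb))
    calc ((a :: L).map (wb M)).prod * ((a :: L).map (wb M)).prod
        = wb M a * ((P * wb M a) * P) := by simp [List.prod_cons, mul_assoc, hP]
      _ = wb M a * ((((-1:K)^L.length) • (wb M a * P)) * P) := by rw [hmove]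
      _ = ((-1:K)^L.length) • (wb M a * (wb M a * (P * P))) := by
          rw [smul_mul_assoc, mul_smul_comm, mul_assoc]
      _ = ((-1:K)^L.length) • (wb M a * (wb M a *
            (((-1:K)^(L.length.choose 2)) • (L.map (fun b => (wb M b)^2)).prod))) := by
          rw [IH]
      _ = ((-1:K)^(L.length + L.length.choose 2)) •
            ((wb M a)^2 * (L.map (fun b => (wb M b)^2)).prod) := by
          rw [mul_smul_comm, mul_smul_comm, smul_smul, ← pow_add, pow_two, mul_assoc]
      _ = ((-1:K)^(((a :: L).length).choose 2)) •
            (((a :: L).map (fun b => (wb M b)^2)).prod) := by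
          have hch : ((a :: L).length).choose 2 = L.length + L.length.choose 2 := by
            simp only [List.length_cons]
            rw [Nat.choose_succ_succ, Nat.choose_one_right]
          rw [hch]
          simp [List.prod_cons]

-- lists for the Chat interleaving
noncomputable def Ol (N k : ℕ) : List (ZMod (2*N)) :=
  List.ofFn (fun i : Fin k => ((2*N - 2*(i:ℕ) - 1 : ℕ) : ZMod (2*N)))
noncomputable def El (N k : ℕ) : List (ZMod (2*N)) :=
  List.ofFn (fun i : Fin k => ((2*N - 2*(i:ℕ) : ℕ) : ZMod (2*N)))
noncomputable def Cl (N k : ℕ) : List (ZMod (2*N)) :=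
  List.ofFn (fun i : Fin (2*k) => ((2*N - (i:ℕ) : ℕ) : ZMod (2*N)))

lemma El_succ (N k : ℕ) : El N (k+1) = El N k ++ [((2*N - 2*k : ℕ) : ZMod (2*N))] := by
  rw [El, El, List.ofFn_succ', List.concat_eq_append]
  congr 1

lemma Ol_succ (N k : ℕ) : Ol N (k+1) = Ol N k ++ [((2*N - 2*k - 1 : ℕ) : ZMod (2*N))] := by
  rw [Ol, Ol, List.ofFn_succ', List.concat_eq_append]
  congr 1

lemma Cl_succ (N k : ℕ) : Cl N (k+1) = Cl N k ++
    [((2*N - 2*k : ℕ) : ZMod (2*N)), ((2*N - 2*k - 1 : ℕ) : ZMod (2*N))] := by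
  rw [Cl, Cl, ofFn_congr' (by omega : 2*(k+1) = 2*k+2)
        (fun t => ((2*N - t : ℕ) : ZMod (2*N))), List.ofFn_add]
  congr 1


lemma cast_pred_add_one {M a : ℕ} (h : 1 ≤ a) : ((a - 1 : ℕ) : ZMod M) + 1 = (a : ZMod M) := by
  rw [Nat.cast_sub h, Nat.cast_one]
  ring

lemma cast_add_one (M a : ℕ) : ((a : ℕ) : ZMod M) + 1 = ((a+1 : ℕ) : ZMod M) := by
  push_cast
  ring

lemma Ol_move (N : ℕ) (hN : 2 ≤ N) (k : ℕ) (hk1 : 1 ≤ k) (hkN : k ≤ N - 1) :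
    ((Ol N k).map (wb (2*N))).prod * wb (2*N) ((2*N - 2*k : ℕ) : ZMod (2*N))
      = (ω⁻¹ * (-1:K)^(k-1)) •
        (wb (2*N) ((2*N - 2*k : ℕ) : ZMod (2*N)) * ((Ol N k).map (wb (2*N))).prod) := by
  haveI : NeZero (2*N) := ⟨by omega⟩
  rw [move_list (2*N) (by omega) _ (Ol N k)]
  congr 1
  rw [Ol]
  simp only [List.map_ofFn, Function.comp_def]
  rw [prod_eval_one _ ⟨k-1, by omega⟩]
  · congr 1
    show cc (2*N) ((2*N - 2*(k-1) - 1 : ℕ) : ZMod (2*N)) (((2*N - 2*k : ℕ) : ZMod (2*N))) = ω⁻¹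
    have he : ((2*N - 2*(k-1) - 1 : ℕ) : ZMod (2*N)) = ((2*N - 2*k : ℕ) : ZMod (2*N)) + 1 := by
      rw [(by omega : 2*N - 2*(k-1) - 1 = (2*N - 2*k) + 1)]
      push_cast
      ring
    rw [he, cc_up (by omega), neg_one_pow_val_even (by omega) (by omega), one_mul]
  · intro i hi
    have hilt := i.isLt
    have hine : (i:ℕ) ≠ k - 1 := fun hc => hi (Fin.ext hc)
    apply cc_neg_one
    · intro h
      have := congrArg (φ N) h
      rw [phi_natCast, phi_natCast, cast2_odd (by omega), cast2_even (by omega)] at this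
      exact absurd this (by decide)
    · intro h
      rw [cast_pred_add_one (show 1 ≤ 2*N - 2*(i:ℕ) by omega)] at h
      rw [Nat.cast_sub (by omega), Nat.cast_sub (by omega), ZMod.natCast_self, zero_sub,
          zero_sub, neg_inj] at h
      have := natCast_inj (by omega) (by omega) h
      omega
    · intro h
      rw [cast_add_one] at h
      have := natCast_inj (by omega) (by omega) h
      omega

lemma interleave (N : ℕ) (hN : 2 ≤ N) :
    ∀ k, k ≤ N →
      ((Cl N k).map (wb (2*N))).prod
        = (((-1:K)^((k-1).choose 2)) * (ω^(k-1))⁻¹) •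
            (((El N k).map (wb (2*N))).prod * ((Ol N k).map (wb (2*N))).prod)
  | 0, _ => by
      have hc : Cl N 0 = [] := by rw [Cl]; exact List.ofFn_eq_nil_iff.2 rfl
      have he : El N 0 = [] := by rw [El]; exact List.ofFn_zero
      have ho : Ol N 0 = [] := by rw [Ol]; exact List.ofFn_zero
      rw [hc, he, ho]
      norm_num [Nat.choose]
  | (k+1), hk1 => by
      have hkN : k ≤ N := by omega
      have IH := interleave N hN k hkN
      rw [Cl_succ, List.map_append, List.prod_append, IH, El_succ, Ol_succ,
          List.map_append, List.prod_append, List.map_append, List.prod_append]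
      simp only [List.map_cons, List.map_nil, List.prod_cons, List.prod_nil, mul_one]
      set e := ((2*N - 2*k : ℕ) : ZMod (2*N)) with hedef
      set o := ((2*N - 2*k - 1 : ℕ) : ZMod (2*N)) with hodef
      set E := ((El N k).map (wb (2*N))).prod with hE
      set O := ((Ol N k).map (wb (2*N))).prod with hO
      rcases Nat.eq_zero_or_pos k with rfl | hkpos
      · have hE1 : E = 1 := by rw [hE, El]; rw [List.ofFn_zero]; rfl
        have hO1 : O = 1 := by rw [hO, Ol]; rw [List.ofFn_zero]; rfl
        rw [hE1, hO1]
        norm_num [Nat.choose]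
      · obtain ⟨p, rfl⟩ : ∃ p, k = p + 1 := ⟨k-1, by omega⟩
        have hmove := Ol_move N hN (p+1) (by omega) (by omega)
        rw [← hedef, ← hO] at hmove
        simp only [Nat.add_sub_cancel] at hmove ⊢
        have hsc : ((-1:K)^((p+1).choose 2)) * (ω^(p+1))⁻¹
            = ((-1:K)^(p.choose 2) * (ω^p)⁻¹) * (ω⁻¹ * (-1:K)^p) := by
          rw [Nat.choose_succ_succ, Nat.choose_one_right, pow_add, pow_succ, mul_inv]
          ring
        rw [hsc, smul_mul_assoc, mul_assoc E O, ← mul_assoc O (wb (2*N) e), hmove,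
            smul_mul_assoc, mul_smul_comm, smul_smul, mul_assoc (wb (2*N) e) O,
            ← mul_assoc E (wb (2*N) e)]

lemma ChatB_eq (N : ℕ) : ChatB (2*N) = ((Cl N N).map (wb (2*N))).prod := by
  simp only [ChatB, Cl, List.map_ofFn]
  congr 1

lemma El_eq_g2 (N : ℕ) : El N N = List.ofFn (g2 N) := rfl

lemma Ol_eq_g1 (N : ℕ) : Ol N N = List.ofFn (g1 N) := by
  rw [Ol]
  congr 1
  funext i
  rw [g1]
  congr 1
  omega

lemma g1_cc (N : ℕ) (hN : 2 ≤ N) : ∀ a ∈ List.ofFn (g1 N), ∀ b ∈ List.ofFn (g1 N),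
    a ≠ b → cc (2*N) a b = -1 := by
  intro a ha b hb hab
  rw [List.mem_ofFn] at ha hb
  obtain ⟨j, rfl⟩ := ha
  obtain ⟨j', rfl⟩ := hb
  apply cc_neg_one hab
  · intro h
    have := congrArg (φ N) h
    rw [map_add, map_one, g1_parity, g1_parity] at this
    exact absurd this (by decide)
  · intro h
    have := congrArg (φ N) h
    rw [map_add, map_one, g1_parity, g1_parity] at this
    exact absurd this (by decide)

lemma g2_cc (N : ℕ) (hN : 2 ≤ N) : ∀ a ∈ List.ofFn (g2 N), ∀ b ∈ List.ofFn (g2 N),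
    a ≠ b → cc (2*N) a b = -1 := by
  intro a ha b hb hab
  rw [List.mem_ofFn] at ha hb
  obtain ⟨j, rfl⟩ := ha
  obtain ⟨j', rfl⟩ := hb
  apply cc_neg_one hab
  · intro h
    have := congrArg (φ N) h
    rw [map_add, map_one, g2_parity, g2_parity] at this
    exact absurd this (by decide)
  · intro h
    have := congrArg (φ N) h
    rw [map_add, map_one, g2_parity, g2_parity] at this
    exact absurd this (by decide)

/-- properties of `B_1` and `B_2` in `A_M^b` for `M = 2N`,
`N ≥ 2` even. -/
theorem stmt18 (N : ℕ) (hN : 2 ≤ N) (heven : Even N) :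
    (∀ k : ZMod (2*N),
        B1 (2*N) * wb (2*N) k + wb (2*N) k * B1 (2*N) = 0 ∧
        B2 (2*N) * wb (2*N) k + wb (2*N) k * B2 (2*N) = 0) ∧
    B1 (2*N) * B2 (2*N) = B2 (2*N) * B1 (2*N) ∧
    Chat1 (2*N) = ((-1 : K) ^ (N*(N-1)/2)) • (B1 (2*N))^2 ∧
    Chat2 (2*N) = ((-1 : K) ^ (N*(N-1)/2)) • (B2 (2*N))^2 ∧
    ChatB (2*N) = (((-1 : K) ^ ((N-1)*(N-2)/2)) * ω ^ ((1 : ℤ) - (N : ℤ)))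
        • (B2 (2*N) * B1 (2*N)) := by
  have hM3 : (3:ℕ) ≤ 2*N := by omega
  have hsq : ((-1:K)^(N.choose 2)) * ((-1:K)^(N.choose 2)) = 1 := by
    rw [← pow_add]; exact Even.neg_one_pow ⟨N.choose 2, rfl⟩
  refine ⟨?_, ?_, ?_, ?_, ?_⟩
  · intro k
    exact ⟨anti_to_sum _ _ (B1_anti N hN heven k), anti_to_sum _ _ (B2_anti N hN heven k)⟩
  · rw [B2_eq N (by omega),
        move_all (2*N) (B1 (2*N)) (B1_anti N hN heven) (List.ofFn (g2 N)),
        List.length_ofFn, Even.neg_one_pow heven, one_smul]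
  · have h := sq_list (2*N) hM3 (List.ofFn (g1 N))
      (List.nodup_ofFn.2 (fun j j' hjj => g1_inj N hjj)) (g1_cc N hN)
    rw [List.length_ofFn, ← B1_eq N (by omega)] at h
    rw [Chat1_eq N (by omega)]
    calc ((List.ofFn (g1 N)).map (fun a => (wb (2*N) a)^2)).prod
        = (((-1:K)^(N.choose 2)) * ((-1:K)^(N.choose 2))) •
            ((List.ofFn (g1 N)).map (fun a => (wb (2*N) a)^2)).prod := by
          rw [hsq, one_smul]
      _ = ((-1:K)^(N.choose 2)) • (B1 (2*N) * B1 (2*N)) := by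
          rw [← smul_smul, ← h]
      _ = ((-1 : K) ^ (N*(N-1)/2)) • (B1 (2*N))^2 := by
          rw [← Nat.choose_two_right, pow_two]
  · have h := sq_list (2*N) hM3 (List.ofFn (g2 N))
      (List.nodup_ofFn.2 (fun j j' hjj => g2_inj N hjj)) (g2_cc N hN)
    rw [List.length_ofFn, ← B2_eq N (by omega)] at h
    rw [Chat2_eq N (by omega)]
    calc ((List.ofFn (g2 N)).map (fun a => (wb (2*N) a)^2)).prod
        = (((-1:K)^(N.choose 2)) * ((-1:K)^(N.choose 2))) •
            ((List.ofFn (g2 N)).map (fun a => (wb (2*N) a)^2)).prod := by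
          rw [hsq, one_smul]
      _ = ((-1:K)^(N.choose 2)) • (B2 (2*N) * B2 (2*N)) := by
          rw [← smul_smul, ← h]
      _ = ((-1 : K) ^ (N*(N-1)/2)) • (B2 (2*N))^2 := by
          rw [← Nat.choose_two_right, pow_two]
  · have h := interleave N hN N le_rfl
    rw [ChatB_eq, h, El_eq_g2, Ol_eq_g1, ← B2_eq N (by omega), ← B1_eq N (by omega)]
    congr 1
    have h1 : (N-1).choose 2 = (N-1)*(N-2)/2 := by
      rw [Nat.choose_two_right]
      congr 1
    have h2 : (ω : K)^((1:ℤ) - (N:ℤ)) = (ω^(N-1 : ℕ))⁻¹ := by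
      rw [(by omega : (1:ℤ) - (N:ℤ) = -((N-1 : ℕ) : ℤ)), zpow_neg, zpow_natCast]
    rw [h1, h2]
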